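/- Let M be a D₀–D₁-bimodule with symmetric duals and let DA_M be the A_M-bimodule whose underlying group is (D₀, 0; M*, D₁), with left action (α, m; 0, β)·(a, 0; δ, b) = (αa + m(δ), 0; βδ, βb) (using a fixed identification M ≅ M**) and right action (a, 0; δ, b)·(α, m; 0, β) = (aα, 0; δα, δ(m) + bβ). Then DA_M is the injective hull of the semisimple right A_M-module (D₀ 0) ⊕ (0 D₁), the natural map A_M → End_{A_M}((DA_M)_{A_M}) is a ring isomorphism, DA_M contains all simple right A_M-modules, and hence ω = (DA_M)[-1] is a canonical complex for A_M. -/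

import Mathlib

section Bimod

/-- The right dual `Hom_S(N_S, S)` of a right `S`-module `N`
(right modules are treated as modules over the opposite ring). -/
abbrev RightDual (S : Type) [Ring S] (N : Type) [AddCommGroup N] [Module Sᵐᵒᵖ N] :
    Type := N →ₗ[Sᵐᵒᵖ] S

/-- The left dual `Hom_R(_R N, R)` of a left `R`-module `N`. -/
abbrev LeftDual (R : Type) [Ring R] (N : Type) [AddCommGroup N] [Module R N] :
    Type := N →ₗ[R] R

variable (R S : Type) [Ring R] [Ring S]
variable (N : Type) [AddCommGroup N] [Module R N] [Module Sᵐᵒᵖ N]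
  [SMulCommClass R Sᵐᵒᵖ N]

namespace RightDual

/-- If `N` is an `R`–`S`-bimodule, the right dual carries a right `R`-action by
precomposition with the left `R`-action: `(ψ • a) x = ψ (a • x)`. -/
instance : Module Rᵐᵒᵖ (RightDual S N) where
  smul a ψ := ψ.comp (DistribMulAction.toLinearMap Sᵐᵒᵖ N a.unop)
  one_smul ψ := by
    apply LinearMap.ext; intro x
    show ψ ((1 : R) • x) = ψ x
    rw [one_smul]
  mul_smul a b ψ := by
    apply LinearMap.ext; intro x
    show ψ ((a * b).unop • x) = ψ (b.unop • a.unop • x)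
    rw [MulOpposite.unop_mul, mul_smul]
  smul_zero a := by apply LinearMap.ext; intro x; rfl
  smul_add a ψ φ := by apply LinearMap.ext; intro x; rfl
  add_smul a b ψ := by
    apply LinearMap.ext; intro x
    show ψ ((a + b).unop • x) = ψ (a.unop • x) + ψ (b.unop • x)
    rw [MulOpposite.unop_add, add_smul, map_add]
  zero_smul ψ := by
    apply LinearMap.ext; intro x
    show ψ ((0 : R) • x) = 0
    rw [zero_smul, map_zero]

@[simp] lemma opSMul_apply (a : Rᵐᵒᵖ) (ψ : RightDual S N) (x : N) :
    (a • ψ) x = ψ (a.unop • x) := rfl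

@[simp] lemma smul_apply' (s : S) (ψ : RightDual S N) (x : N) :
    (s • ψ) x = s * ψ x := rfl

instance : SMulCommClass S Rᵐᵒᵖ (RightDual S N) where
  smul_comm s a ψ := by apply LinearMap.ext; intro x; rfl

end RightDual

namespace LeftDual

/-- If `N` is an `R`–`S`-bimodule, the left dual carries a left `S`-action by
precomposition with the right `S`-action: `(b • ψ) x = ψ (x b)`. -/
noncomputable instance : Module S (LeftDual R N) where
  smul b ψ :=
    haveI : SMulCommClass Sᵐᵒᵖ R N := SMulCommClass.symm R Sᵐᵒᵖ N
    ψ.comp (DistribMulAction.toLinearMap R N (MulOpposite.op b))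
  one_smul ψ := by
    apply LinearMap.ext; intro x
    show ψ ((MulOpposite.op (1:S)) • x) = ψ x
    rw [MulOpposite.op_one, one_smul]
  mul_smul a b ψ := by
    apply LinearMap.ext; intro x
    show ψ ((MulOpposite.op (a*b)) • x) = ψ (MulOpposite.op b • MulOpposite.op a • x)
    rw [MulOpposite.op_mul, mul_smul]
  smul_zero a := by apply LinearMap.ext; intro x; rfl
  smul_add a ψ φ := by apply LinearMap.ext; intro x; rfl
  add_smul a b ψ := by
    apply LinearMap.ext; intro x
    show ψ ((MulOpposite.op (a+b)) • x) = ψ (MulOpposite.op a • x) + ψ (MulOpposite.op b • x)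
    rw [MulOpposite.op_add, add_smul, map_add]
  zero_smul ψ := by
    apply LinearMap.ext; intro x
    show ψ ((MulOpposite.op (0:S)) • x) = 0
    rw [MulOpposite.op_zero, zero_smul, map_zero]

@[simp] lemma sSMul_apply (b : S) (ψ : LeftDual R N) (x : N) :
    (b • ψ) x = ψ (MulOpposite.op b • x) := rfl

instance : SMulCommClass S Rᵐᵒᵖ (LeftDual R N) where
  smul_comm s a ψ := by apply LinearMap.ext; intro x; rfl

end LeftDual

end Bimod
set_option linter.unusedSectionVars false

section Species

variable (D₀ D₁ : Type) [DivisionRing D₀] [DivisionRing D₁]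
variable (M : Type) [AddCommGroup M] [Module D₀ M] [Module D₁ᵐᵒᵖ M]
  [SMulCommClass D₀ D₁ᵐᵒᵖ M]

/-- Ringel's bimodule species: the triangular matrix ring
`A_M = (D₀, M; 0, D₁)`, realized on the carrier `D₀ × M × D₁`. -/
abbrev Species : Type := D₀ × M × D₁

namespace Species

/-- Matrix-style multiplication on the triangular matrix ring. -/
instance : Ring (Species D₀ D₁ M) where
  __ := (inferInstance : AddCommGroup (D₀ × M × D₁))
  mul x y := (x.1 * y.1, x.1 • y.2.1 + MulOpposite.op y.2.2 • x.2.1, x.2.2 * y.2.2)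
  one := (1, 0, 1)
  mul_assoc x y z := by
    refine Prod.ext (mul_assoc _ _ _) (Prod.ext ?_ (mul_assoc _ _ _))
    show (x.1 * y.1) • z.2.1 + MulOpposite.op z.2.2 • (x.1 • y.2.1 + MulOpposite.op y.2.2 • x.2.1)
        = x.1 • (y.1 • z.2.1 + MulOpposite.op z.2.2 • y.2.1) +
            MulOpposite.op (y.2.2 * z.2.2) • x.2.1
    haveI : SMulCommClass D₁ᵐᵒᵖ D₀ M := SMulCommClass.symm _ _ _
    rw [MulOpposite.op_mul, smul_add, smul_add, mul_smul, mul_smul]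
    rw [smul_comm (MulOpposite.op z.2.2) x.1 y.2.1]
    abel
  one_mul x := by
    refine Prod.ext (one_mul _) (Prod.ext ?_ (one_mul _))
    show (1 : D₀) • x.2.1 + MulOpposite.op x.2.2 • (0 : M) = x.2.1
    rw [one_smul, smul_zero, add_zero]
  mul_one x := by
    refine Prod.ext (mul_one _) (Prod.ext ?_ (mul_one _))
    show x.1 • (0 : M) + MulOpposite.op (1 : D₁) • x.2.1 = x.2.1
    rw [smul_zero, MulOpposite.op_one, one_smul, zero_add]
  left_distrib x y z := by
    refine Prod.ext (mul_add _ _ _) (Prod.ext ?_ (mul_add _ _ _))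
    show x.1 • (y.2.1 + z.2.1) + MulOpposite.op (y.2.2 + z.2.2) • x.2.1
        = x.1 • y.2.1 + MulOpposite.op y.2.2 • x.2.1 +
            (x.1 • z.2.1 + MulOpposite.op z.2.2 • x.2.1)
    rw [smul_add, MulOpposite.op_add, add_smul]
    abel
  right_distrib x y z := by
    refine Prod.ext (add_mul _ _ _) (Prod.ext ?_ (add_mul _ _ _))
    show (x.1 + y.1) • z.2.1 + MulOpposite.op z.2.2 • (x.2.1 + y.2.1)
        = x.1 • z.2.1 + MulOpposite.op z.2.2 • x.2.1 +
            (y.1 • z.2.1 + MulOpposite.op z.2.2 • y.2.1)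
    rw [add_smul, smul_add]
    abel
  zero_mul x := by
    refine Prod.ext (zero_mul _) (Prod.ext ?_ (zero_mul _))
    show (0 : D₀) • x.2.1 + MulOpposite.op x.2.2 • (0 : M) = 0
    rw [zero_smul, smul_zero, add_zero]
  mul_zero x := by
    refine Prod.ext (mul_zero _) (Prod.ext ?_ (mul_zero _))
    show x.1 • (0 : M) + MulOpposite.op (0 : D₁) • x.2.1 = 0
    rw [smul_zero, MulOpposite.op_zero, zero_smul, add_zero]

@[simp] lemma mul_def (x y : Species D₀ D₁ M) :
    x * y = (x.1 * y.1, x.1 • y.2.1 + MulOpposite.op y.2.2 • x.2.1, x.2.2 * y.2.2) := rfl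

@[simp] lemma one_def : (1 : Species D₀ D₁ M) = (1, 0, 1) := rfl

/-- The idempotent `e₀`. -/
def e0 : Species D₀ D₁ M := (1, 0, 0)

/-- The idempotent `e₁`. -/
def e1 : Species D₀ D₁ M := (0, 0, 1)

end Species

end Species

section Statement6


variable (D₀ D₁ : Type) [DivisionRing D₀] [DivisionRing D₁]
variable (M : Type) [AddCommGroup M] [Module D₀ M] [Module D₁ᵐᵒᵖ M]
  [SMulCommClass D₀ D₁ᵐᵒᵖ M]

/-- The right `A_M`-module `(M*  D₁)`: the carrier is `M* × D₁` and
`(δ, b) • (α, m; 0, β) = (δα, δ(m) + bβ)`, where `(δα)(x) = δ(αx)`. -/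
def InjRight (D₀ D₁ : Type) [DivisionRing D₁] (M : Type) [AddCommGroup M]
    [Module D₁ᵐᵒᵖ M] : Type := RightDual D₁ M × D₁

instance : AddCommGroup (InjRight D₀ D₁ M) :=
  inferInstanceAs (AddCommGroup (RightDual D₁ M × D₁))

noncomputable instance : Module (Species D₀ D₁ M)ᵐᵒᵖ (InjRight D₀ D₁ M) where
  smul y p := (MulOpposite.op y.unop.1 • p.1, p.1 y.unop.2.1 + p.2 * y.unop.2.2)
  one_smul p := by
    refine Prod.ext ?_ ?_
    · show MulOpposite.op (1 : D₀) • p.1 = p.1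
      apply LinearMap.ext; intro z
      show p.1 ((1 : D₀) • z) = p.1 z
      rw [one_smul]
    · show p.1 (0 : M) + p.2 * 1 = p.2
      rw [map_zero, mul_one, zero_add]
  mul_smul x y p := by
    refine Prod.ext ?_ ?_
    · apply LinearMap.ext; intro z
      show p.1 ((y.unop.1 * x.unop.1) • z) = p.1 (y.unop.1 • x.unop.1 • z)
      rw [mul_smul]
    · show p.1 (y.unop.1 • x.unop.2.1 + MulOpposite.op x.unop.2.2 • y.unop.2.1)
          + p.2 * (y.unop.2.2 * x.unop.2.2)
        = p.1 (y.unop.1 • x.unop.2.1) + (p.1 y.unop.2.1 + p.2 * y.unop.2.2) * x.unop.2.2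
      rw [map_add, LinearMap.map_smul, MulOpposite.smul_eq_mul_unop, MulOpposite.unop_op,
        add_mul, mul_assoc, add_assoc]
  smul_zero y := by
    refine Prod.ext ?_ ?_
    · apply LinearMap.ext; intro z; rfl
    · show (0 : RightDual D₁ M) y.unop.2.1 + 0 * y.unop.2.2 = 0
      rw [LinearMap.zero_apply, zero_mul, add_zero]
  smul_add y p q := by
    refine Prod.ext ?_ ?_
    · apply LinearMap.ext; intro z; rfl
    · show (p.1 + q.1) y.unop.2.1 + (p.2 + q.2) * y.unop.2.2
        = p.1 y.unop.2.1 + p.2 * y.unop.2.2 + (q.1 y.unop.2.1 + q.2 * y.unop.2.2)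
      rw [LinearMap.add_apply, add_mul]
      abel
  add_smul x y p := by
    refine Prod.ext ?_ ?_
    · apply LinearMap.ext; intro z
      show p.1 ((x.unop.1 + y.unop.1) • z) = p.1 (x.unop.1 • z) + p.1 (y.unop.1 • z)
      rw [add_smul, map_add]
    · show p.1 (x.unop.2.1 + y.unop.2.1) + p.2 * (x.unop.2.2 + y.unop.2.2)
        = p.1 x.unop.2.1 + p.2 * x.unop.2.2 + (p.1 y.unop.2.1 + p.2 * y.unop.2.2)
      rw [map_add, mul_add]
      abel
  zero_smul p := by
    refine Prod.ext ?_ ?_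
    · apply LinearMap.ext; intro z
      show p.1 ((0 : D₀) • z) = 0
      rw [zero_smul, map_zero]
    · show p.1 (0 : M) + p.2 * 0 = 0
      rw [map_zero, mul_zero, add_zero]
/-- The simple injective right `A_M`-module `(D₀ 0)`: the carrier is `D₀` and
`a • (α, m; 0, β) = aα`. -/
abbrev E0Simple (D₀ D₁ M : Type) : Type := D₀

/-- Projection of the triangular matrix ring onto its upper diagonal entry. -/
def projA : Species D₀ D₁ M →+* D₀ where
  toFun x := x.1
  map_one' := rfl
  map_mul' _ _ := rfl
  map_zero' := rfl
  map_add' _ _ := rfl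

noncomputable instance : Module (Species D₀ D₁ M)ᵐᵒᵖ (E0Simple D₀ D₁ M) :=
  Module.compHom D₀ (RingHom.op (projA D₀ D₁ M))

/-- The simple right `A_M`-module `(0 D₁)`. -/
abbrev SimpleRight (D₀ D₁ M : Type) : Type := D₁

/-- Projection of the triangular matrix ring onto its lower diagonal entry. -/
def projB : Species D₀ D₁ M →+* D₁ where
  toFun x := x.2.2
  map_one' := rfl
  map_mul' _ _ := rfl
  map_zero' := rfl
  map_add' _ _ := rfl

noncomputable instance : Module (Species D₀ D₁ M)ᵐᵒᵖ (SimpleRight D₀ D₁ M) :=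
  Module.compHom D₁ (RingHom.op (projB D₀ D₁ M))

/-- The `A_M`-bimodule `DA_M`, as a right `A_M`-module: the carrier is
`(D₀, 0; M*, D₁) = D₀ × M* × D₁` and the right action is
`(a, 0; δ, b) • (α, m; 0, β) = (aα, 0; δα, δ(m) + bβ)`; as a right module it is
the direct sum `(D₀ 0) ⊕ (M* D₁)`. -/
abbrev DAmod (D₀ D₁ : Type) [DivisionRing D₀] [DivisionRing D₁] (M : Type)
    [AddCommGroup M] [Module D₀ M] [Module D₁ᵐᵒᵖ M] [SMulCommClass D₀ D₁ᵐᵒᵖ M] :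
    Type :=
  E0Simple D₀ D₁ M × InjRight D₀ D₁ M

/-- The socle `(D₀ 0) ⊕ (0 D₁)` of `DA_M`, as a submodule. -/
noncomputable def socDA : Submodule (Species D₀ D₁ M)ᵐᵒᵖ (DAmod D₀ D₁ M) where
  carrier := {p | p.2.1 = 0}
  add_mem' := by
    rintro p q (hp : p.2.1 = 0) (hq : q.2.1 = 0)
    show p.2.1 + q.2.1 = 0
    rw [hp, hq, add_zero]
  zero_mem' := rfl
  smul_mem' := by
    rintro y p (hp : p.2.1 = 0)
    show MulOpposite.op y.unop.1 • p.2.1 = 0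
    rw [hp, smul_zero]

namespace Statement6Aux
open MulOpposite

variable {D₀ D₁ : Type} [DivisionRing D₀] [DivisionRing D₁]
variable {M : Type} [AddCommGroup M] [Module D₀ M] [Module D₁ᵐᵒᵖ M]
  [SMulCommClass D₀ D₁ᵐᵒᵖ M]

local notation "A" => Species D₀ D₁ M

lemma smulQ (x : A) (p : DAmod D₀ D₁ M) :
    (op x) • p = (p.1 * x.1, op x.1 • p.2.1, p.2.1 x.2.1 + p.2.2 * x.2.2) := rfl

lemma ir_add_fst (p q : InjRight D₀ D₁ M) : (p + q).1 = p.1 + q.1 := rfl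

lemma ir_add_snd (p q : InjRight D₀ D₁ M) : (p + q).2 = p.2 + q.2 := rfl

lemma ir_zero_fst : (0 : InjRight D₀ D₁ M).1 = 0 := rfl

lemma ir_zero_snd : (0 : InjRight D₀ D₁ M).2 = 0 := rfl

lemma op0_smul (ψ : RightDual D₁ M) : (op (0:D₀)) • ψ = 0 := by
  ext z; simp

/-- evaluation map `r ↦ r • q` as a left `Aᵐᵒᵖ`-linear map. -/
noncomputable def evalAt (q : DAmod D₀ D₁ M) : Aᵐᵒᵖ →ₗ[Aᵐᵒᵖ] DAmod D₀ D₁ M where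
  toFun r := r • q
  map_add' r s := add_smul r s q
  map_smul' r s := mul_smul r s q

@[simp] lemma evalAt_apply (q : DAmod D₀ D₁ M) (r : Aᵐᵒᵖ) : evalAt q r = r • q := rfl

/-- lower-row inclusion `M × D₁ → A`. -/
def lo (v : M × D₁) : A := ((0:D₀), v.1, v.2)

lemma lo_add (v w : M × D₁) : (lo (v + w) : A) = lo v + lo w :=
  Prod.ext (zero_add (0:D₀)).symm rfl

lemma lo_smul (c : D₁ᵐᵒᵖ) (v : M × D₁) :
    (lo (c • v) : A) = lo v * ((0:D₀), (0:M), c.unop) := by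
  simp [lo, MulOpposite.smul_eq_mul_unop]

lemma lo_mul_e1 (v : M × D₁) : lo v * Species.e1 D₀ D₁ M = lo v := by
  simp [lo, Species.e1]

lemma mul_e1 (y : A) : y * Species.e1 D₀ D₁ M = lo (y.2.1, y.2.2) := by
  simp [lo, Species.e1]

lemma e0_mul_mid (z : M) :
    Species.e0 D₀ D₁ M * ((0:D₀), z, (0:D₁)) = lo (z, (0:D₁)) := by
  simp [lo, Species.e0]

lemma e0_mul_diag (a : D₀) :
    Species.e0 D₀ D₁ M * ((a, (0:M), (0:D₁)) : A) = (a, (0:M), (0:D₁)) := by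
  simp [Species.e0]

section IdealSec

lemma mem_mul (I : Ideal Aᵐᵒᵖ) {x : A} (hx : op x ∈ I) (z : A) : op (x * z) ∈ I := by
  have h := I.smul_mem (op z) hx
  rwa [smul_eq_mul, ← op_mul] at h

lemma g_apply_mul {I : Ideal Aᵐᵒᵖ} (g : I →ₗ[Aᵐᵒᵖ] DAmod D₀ D₁ M) {x : A} (hx : op x ∈ I) (z : A)
    (hxz : op (x * z) ∈ I) :
    g ⟨op (x * z), hxz⟩ = (op z) • g ⟨op x, hx⟩ := by
  have h : (⟨op (x*z), hxz⟩ : I) = (op z) • (⟨op x, hx⟩ : I) := by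
    apply Subtype.ext
    show op (x*z) = op z • op x
    rw [smul_eq_mul, ← op_mul]
  rw [h, map_smul]

lemma g_apply_add {I : Ideal Aᵐᵒᵖ} (g : I →ₗ[Aᵐᵒᵖ] DAmod D₀ D₁ M) {x y : A} (hx : op x ∈ I) (hy : op y ∈ I)
    (hxy : op (x + y) ∈ I) :
    g ⟨op (x + y), hxy⟩ = g ⟨op x, hx⟩ + g ⟨op y, hy⟩ := by
  have h : (⟨op (x+y), hxy⟩ : I) = (⟨op x, hx⟩ : I) + ⟨op y, hy⟩ := by
    apply Subtype.ext
    show op (x+y) = op x + op y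
    rw [op_add]
  rw [h, map_add]

lemma g_congr {I : Ideal Aᵐᵒᵖ} (g : I →ₗ[Aᵐᵒᵖ] DAmod D₀ D₁ M) {x y : A} (hx : op x ∈ I) (h : x = y) (hy : op y ∈ I) :
    g ⟨op x, hx⟩ = g ⟨op y, hy⟩ := by subst h; rfl

end IdealSec

/-- The `D₁ᵐᵒᵖ`-submodule of `M × D₁` consisting of lower rows of a right ideal. -/
def lowN (I : Ideal Aᵐᵒᵖ) : Submodule D₁ᵐᵒᵖ (M × D₁) where
  carrier := {v | op (lo v) ∈ I}
  add_mem' := by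
    intro v w hv hw
    have h := I.add_mem hv hw
    show op (lo (v + w)) ∈ I
    rwa [lo_add, op_add]
  zero_mem' := by
    show op (lo (0 : M × D₁)) ∈ I
    have h : lo (0 : M × D₁) = (0 : A) := rfl
    rw [h, op_zero]; exact I.zero_mem
  smul_mem' := by
    intro c v hv
    show op (lo (c • v)) ∈ I
    rw [lo_smul]
    exact mem_mul I hv _

/-- The lower-right-corner functional of `g` on the lower rows of `I`. -/
noncomputable def gammaI {I : Ideal Aᵐᵒᵖ} (g : I →ₗ[Aᵐᵒᵖ] DAmod D₀ D₁ M) :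
    lowN I →ₗ[D₁ᵐᵒᵖ] D₁ where
  toFun v := (g ⟨op (lo v.1), v.2⟩).2.2
  map_add' v w := by
    have hvw : op (lo (v.1 + w.1)) ∈ I := (v + w).2
    have h1 : op ((lo v.1 + lo w.1 : A)) ∈ I := by rw [← lo_add]; exact hvw
    have e1 := g_congr g hvw (lo_add v.1 w.1) h1
    have e2 := g_apply_add g v.2 w.2 h1
    show (g ⟨op (lo (v.1 + w.1)), hvw⟩).2.2
        = (g ⟨op (lo v.1), v.2⟩).2.2 + (g ⟨op (lo w.1), w.2⟩).2.2
    rw [e1, e2]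
    rfl
  map_smul' c v := by
    have hcv : op (lo (c • v.1)) ∈ I := (c • v).2
    have h1 : op (lo v.1 * ((0:D₀), (0:M), c.unop)) ∈ I := by
      rw [← lo_smul]; exact hcv
    have e1 := g_congr g hcv (lo_smul c v.1) h1
    have e2 := g_apply_mul g v.2 ((0:D₀), (0:M), c.unop) h1
    show (g ⟨op (lo (c • v.1)), hcv⟩).2.2 = c • (g ⟨op (lo v.1), v.2⟩).2.2
    rw [e1, e2, smulQ]
    show (g ⟨op (lo v.1), v.2⟩).2.1 0 + (g ⟨op (lo v.1), v.2⟩).2.2 * c.unop = _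
    simp [MulOpposite.smul_eq_mul_unop]

theorem baerDA : Module.Baer Aᵐᵒᵖ (DAmod D₀ D₁ M) := by
  intro I g
  obtain ⟨γ', hγ'⟩ := LinearMap.exists_extend (gammaI g)
  set δ : RightDual D₁ M := γ'.comp (LinearMap.inl D₁ᵐᵒᵖ M D₁) with hδdef
  set d : D₁ := γ' ((0:M), (1:D₁)) with hddef
  have hγv : ∀ (v : M × D₁) (hv : v ∈ lowN I), γ' v = (g ⟨op (lo v), hv⟩).2.2 := by
    intro v hv
    exact LinearMap.congr_fun hγ' ⟨v, hv⟩
  have hγeval : ∀ (m : M) (b : D₁), γ' (m, b) = δ m + d * b := by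
    intro m b
    have h1 : ((m, b) : M × D₁) = (m, (0:D₁)) + ((0:M), b) := by simp
    have h2 : (((0:M), b) : M × D₁) = (op b) • ((0:M), (1:D₁)) := by
      simp [MulOpposite.smul_eq_mul_unop]
    rw [h1, map_add, h2, map_smul, MulOpposite.smul_eq_mul_unop]
    rfl
  -- value of g on lower rows
  have hproj : ∀ (v : M × D₁) (hv : op (lo v) ∈ I),
      g ⟨op (lo v), hv⟩ = ((0:D₀), (0:RightDual D₁ M), δ v.1 + d * v.2) := by
    intro v hv
    have h1 : g ⟨op (lo v), hv⟩ = op (Species.e1 D₀ D₁ M) • g ⟨op (lo v), hv⟩ := by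
      conv_lhs => rw [g_congr g hv (lo_mul_e1 v).symm (by rw [lo_mul_e1]; exact hv),
        g_apply_mul g hv (Species.e1 D₀ D₁ M)]
    have h2 : γ' v = (g ⟨op (lo v), hv⟩).2.2 := hγv v hv
    rw [h1, smulQ]
    refine Prod.ext ?_ (Prod.ext ?_ ?_)
    · show (g ⟨op (lo v), hv⟩).1 * (Species.e1 D₀ D₁ M).1 = 0
      simp [Species.e1]
    · show op (Species.e1 D₀ D₁ M).1 • (g ⟨op (lo v), hv⟩).2.1 = 0
      show op (0:D₀) • (g ⟨op (lo v), hv⟩).2.1 = 0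
      rw [op0_smul]
    · show (g ⟨op (lo v), hv⟩).2.1 (Species.e1 D₀ D₁ M).2.1
          + (g ⟨op (lo v), hv⟩).2.2 * (Species.e1 D₀ D₁ M).2.2 = δ v.1 + d * v.2
      show (g ⟨op (lo v), hv⟩).2.1 (0:M) + (g ⟨op (lo v), hv⟩).2.2 * (1:D₁) = δ v.1 + d * v.2
      rw [map_zero, zero_add, mul_one, ← h2, ← hγeval]
  by_cases he₀ : op (Species.e0 D₀ D₁ M) ∈ I
  · -- e₀ ∈ I
    set w := g ⟨op (Species.e0 D₀ D₁ M), he₀⟩ with hwdef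
    have hδ0 : w.2.1 = δ := by
      ext z
      have hz : op (lo (z, (0:D₁))) ∈ I := by
        have h := mem_mul I he₀ ((0:D₀), z, (0:D₁))
        rwa [e0_mul_mid] at h
      have h1 := hproj (z, (0:D₁)) hz
      have h2 : g ⟨op (lo (z, (0:D₁))), hz⟩ = op ((0:D₀), z, (0:D₁)) • w := by
        rw [g_congr g hz (e0_mul_mid z).symm (by rw [e0_mul_mid]; exact hz),
          g_apply_mul g he₀ ((0:D₀), z, (0:D₁))]
      have h3 := (h1.symm.trans h2)
      have h4 := congrArg (fun q : DAmod D₀ D₁ M => q.2.2) h3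
      simp only [smulQ] at h4
      -- h4 : δ z + d * 0 = w.2.1 z + w.2.2 * 0
      simpa using h4.symm
    refine ⟨evalAt (w.1, δ, d), ?_⟩
    intro x mem
    set y := unop x with hydef
    have mem' : op y ∈ I := by rwa [hydef, op_unop]
    have hmb : op (lo (y.2.1, y.2.2)) ∈ I := by
      have h := mem_mul I mem' (Species.e1 D₀ D₁ M)
      rwa [mul_e1] at h
    have ha' : op ((y.1, (0:M), (0:D₁)) : A) ∈ I := by
      have h := mem_mul I he₀ ((y.1, (0:M), (0:D₁)) : A)
      rwa [e0_mul_diag] at h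
    have hdecomp : y = ((y.1, (0:M), (0:D₁)) : A) + lo (y.2.1, y.2.2) := by
      refine Prod.ext ?_ (Prod.ext ?_ ?_) <;> simp [lo]
    have hg1 : g ⟨x, mem⟩ = g ⟨op y, mem'⟩ := rfl
    have hg2 : g ⟨op ((y.1, (0:M), (0:D₁)) : A), ha'⟩ = op ((y.1, (0:M), (0:D₁)) : A) • w := by
      rw [g_congr g ha' (e0_mul_diag y.1).symm (by rw [e0_mul_diag]; exact ha'),
        g_apply_mul g he₀ _]
    rw [evalAt_apply, hg1,
      g_congr g mem' hdecomp (by rw [← hdecomp]; exact mem'),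
      g_apply_add g ha' hmb, hg2, hproj _ hmb]
    have hx : x = op y := (op_unop x).symm
    rw [hx, smulQ, smulQ]
    refine Prod.ext ?_ (Prod.ext ?_ ?_)
    · exact (add_zero _).symm
    · show op y.1 • δ = op y.1 • w.2.1 + 0
      rw [hδ0, add_zero]
    · show _ = (w.2.1 0 + w.2.2 * 0) + _
      simp
  · -- no e₀ : all elements of I have zero upper-left entry
    have hzero : ∀ z ∈ I, (unop z).1 = 0 := by
      intro z hz
      by_contra hne
      refine he₀ ?_
      have h := mem_mul I (x := unop z) (by rwa [op_unop]) (((unop z).1)⁻¹, (0:M), (0:D₁))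
      have e : (unop z) * ((((unop z).1)⁻¹ : D₀), (0:M), (0:D₁)) = Species.e0 D₀ D₁ M := by
        refine Prod.ext ?_ (Prod.ext ?_ ?_) <;>
          simp [Species.e0, mul_inv_cancel₀ hne]
      rwa [e] at h
    refine ⟨evalAt ((0:D₀), δ, d), ?_⟩
    intro x mem
    set y := unop x with hydef
    have mem' : op y ∈ I := by rwa [hydef, op_unop]
    have h0 : y.1 = 0 := hzero x mem
    have hy : y = lo (y.2.1, y.2.2) := Prod.ext h0 rfl
    have hg1 : g ⟨x, mem⟩ = g ⟨op y, mem'⟩ := rfl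
    rw [evalAt_apply, hg1, g_congr g mem' hy (by rw [← hy]; exact mem'),
      hproj _ (by rw [← hy]; exact mem')]
    have hx : x = op y := (op_unop x).symm
    rw [hx, smulQ]
    refine Prod.ext ?_ (Prod.ext ?_ ?_) <;> simp [h0, op0_smul]

lemma mem_socDA (p : DAmod D₀ D₁ M) : p ∈ socDA D₀ D₁ M ↔ p.2.1 = 0 := Iff.rfl

/-- The socle of `DAmod` is `(D₀ 0) ⊕ (0 D₁)`. -/
noncomputable def socEquiv :
    (socDA D₀ D₁ M) ≃ₗ[Aᵐᵒᵖ] (E0Simple D₀ D₁ M × SimpleRight D₀ D₁ M) where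
  toFun p := (p.1.1, p.1.2.2)
  map_add' p q := rfl
  map_smul' r p := by
    have hp : (p : DAmod D₀ D₁ M).2.1 = 0 := p.2
    refine Prod.ext rfl ?_
    show (p : DAmod D₀ D₁ M).2.1 (unop r).2.1 + (p : DAmod D₀ D₁ M).2.2 * (unop r).2.2
        = (p : DAmod D₀ D₁ M).2.2 * (unop r).2.2
    rw [hp]
    simp
  invFun v := ⟨(v.1, (0 : RightDual D₁ M), v.2), rfl⟩
  left_inv p := Subtype.ext (Prod.ext rfl (Prod.ext p.2.symm rfl))
  right_inv v := rfl

/-- `DAmod` is an essential extension of its socle. -/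
theorem socEssential (K : Submodule Aᵐᵒᵖ (DAmod D₀ D₁ M))
    (hK : K ⊓ socDA D₀ D₁ M = ⊥) : K = ⊥ := by
  rw [eq_bot_iff]
  intro p hp
  by_cases h0 : p.2.1 = 0
  · have hpmem : p ∈ K ⊓ socDA D₀ D₁ M := ⟨hp, h0⟩
    rw [hK] at hpmem
    exact hpmem
  · exfalso
    obtain ⟨m, hm⟩ : ∃ m, p.2.1 m ≠ 0 := by
      by_contra h
      push_neg at h
      exact h0 (LinearMap.ext h)
    have hq1 : (op (((0:D₀), m, (0:D₁)) : A) : Aᵐᵒᵖ) • p ∈ K := K.smul_mem _ hp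
    have hq2 : (op (((0:D₀), m, (0:D₁)) : A) : Aᵐᵒᵖ) • p ∈ socDA D₀ D₁ M := by
      show (op (0:D₀)) • p.2.1 = 0
      exact op0_smul _
    have hq0 : (op (((0:D₀), m, (0:D₁)) : A) : Aᵐᵒᵖ) • p = 0 := by
      have hmem : (op (((0:D₀), m, (0:D₁)) : A) : Aᵐᵒᵖ) • p ∈ K ⊓ socDA D₀ D₁ M := ⟨hq1, hq2⟩
      rw [hK] at hmem
      exact hmem
    have h5 : p.2.1 m + p.2.2 * 0 = 0 := congrArg (fun q : DAmod D₀ D₁ M => q.2.2) hq0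
    apply hm
    simpa using h5

section Lmul

lemma lmul_one (e : M ≃ₗ[D₀] RightDual D₀ (RightDual D₁ M))
    (lmul : Species D₀ D₁ M → (DAmod D₀ D₁ M →ₗ[Aᵐᵒᵖ] DAmod D₀ D₁ M))
    (hlmul : ∀ (y : Species D₀ D₁ M) (p : DAmod D₀ D₁ M),
      lmul y p = (y.1 * p.1 + e y.2.1 p.2.1, y.2.2 • p.2.1, y.2.2 * p.2.2)) :
    lmul 1 = LinearMap.id := by
  apply LinearMap.ext
  intro p
  rw [hlmul]
  show ((1:D₀) * p.1 + e 0 p.2.1, (1:D₁) • p.2.1, (1:D₁) * p.2.2) = p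
  refine Prod.ext ?_ (Prod.ext ?_ ?_) <;> simp

lemma lmul_mul (e : M ≃ₗ[D₀] RightDual D₀ (RightDual D₁ M))
    (lmul : Species D₀ D₁ M → (DAmod D₀ D₁ M →ₗ[Aᵐᵒᵖ] DAmod D₀ D₁ M))
    (hlmul : ∀ (y : Species D₀ D₁ M) (p : DAmod D₀ D₁ M),
      lmul y p = (y.1 * p.1 + e y.2.1 p.2.1, y.2.2 • p.2.1, y.2.2 * p.2.2))
    (y y' : Species D₀ D₁ M)
    (he : ∀ (b : D₁ᵐᵒᵖ) (x : M), e (b • x) = b • e x) :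
    lmul (y * y') = (lmul y).comp (lmul y') := by
  apply LinearMap.ext
  intro p
  rw [LinearMap.comp_apply, hlmul, hlmul, hlmul]
  refine Prod.ext ?_ (Prod.ext ?_ ?_)
  · show (y.1 * y'.1) * p.1 + e (y.1 • y'.2.1 + op y'.2.2 • y.2.1) p.2.1
      = y.1 * (y'.1 * p.1 + e y'.2.1 p.2.1) + e y.2.1 (y'.2.2 • p.2.1)
    rw [map_add, LinearMap.add_apply, map_smul, LinearMap.smul_apply, smul_eq_mul,
      he (op y'.2.2) y.2.1, RightDual.opSMul_apply, unop_op, mul_add, mul_assoc, add_assoc]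
  · show (y.2.2 * y'.2.2) • p.2.1 = y.2.2 • (y'.2.2 • p.2.1)
    rw [mul_smul]
  · show (y.2.2 * y'.2.2) * p.2.2 = y.2.2 * (y'.2.2 * p.2.2)
    rw [mul_assoc]

lemma lmul_add (e : M ≃ₗ[D₀] RightDual D₀ (RightDual D₁ M))
    (lmul : Species D₀ D₁ M → (DAmod D₀ D₁ M →ₗ[Aᵐᵒᵖ] DAmod D₀ D₁ M))
    (hlmul : ∀ (y : Species D₀ D₁ M) (p : DAmod D₀ D₁ M),
      lmul y p = (y.1 * p.1 + e y.2.1 p.2.1, y.2.2 • p.2.1, y.2.2 * p.2.2))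
    (y y' : Species D₀ D₁ M) :
    lmul (y + y') = lmul y + lmul y' := by
  apply LinearMap.ext
  intro p
  rw [LinearMap.add_apply, hlmul, hlmul, hlmul]
  refine Prod.ext ?_ (Prod.ext ?_ ?_)
  · show (y.1 + y'.1) * p.1 + e (y.2.1 + y'.2.1) p.2.1
      = (y.1 * p.1 + e y.2.1 p.2.1) + (y'.1 * p.1 + e y'.2.1 p.2.1)
    rw [map_add, LinearMap.add_apply, add_mul]
    abel
  · show (y.2.2 + y'.2.2) • p.2.1 = y.2.2 • p.2.1 + y'.2.2 • p.2.1
    rw [add_smul]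
  · show (y.2.2 + y'.2.2) * p.2.2 = y.2.2 * p.2.2 + y'.2.2 * p.2.2
    rw [add_mul]

lemma lmul_inj (e : M ≃ₗ[D₀] RightDual D₀ (RightDual D₁ M))
    (lmul : Species D₀ D₁ M → (DAmod D₀ D₁ M →ₗ[Aᵐᵒᵖ] DAmod D₀ D₁ M))
    (hlmul : ∀ (y : Species D₀ D₁ M) (p : DAmod D₀ D₁ M),
      lmul y p = (y.1 * p.1 + e y.2.1 p.2.1, y.2.2 • p.2.1, y.2.2 * p.2.2)) :
    Function.Injective lmul := by
  intro y y' h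
  have key : ∀ p : DAmod D₀ D₁ M,
      ((y.1 * p.1 + e y.2.1 p.2.1, y.2.2 • p.2.1, y.2.2 * p.2.2) : DAmod D₀ D₁ M)
      = (y'.1 * p.1 + e y'.2.1 p.2.1, y'.2.2 • p.2.1, y'.2.2 * p.2.2) := by
    intro p
    exact (hlmul y p).symm.trans ((LinearMap.congr_fun h p).trans (hlmul y' p))
  have h1 : y.1 = y'.1 := by
    have h' := congrArg (fun q : DAmod D₀ D₁ M => q.1)
      (key ((1:D₀), (0 : RightDual D₁ M), (0:D₁)))
    simpa using h'
  have h3 : y.2.2 = y'.2.2 := by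
    have h' := congrArg (fun q : DAmod D₀ D₁ M => q.2.2)
      (key ((0:D₀), (0 : RightDual D₁ M), (1:D₁)))
    simpa using h'
  have h2 : y.2.1 = y'.2.1 := by
    apply e.injective
    apply LinearMap.ext
    intro δ
    have h' := congrArg (fun q : DAmod D₀ D₁ M => q.1)
      (key ((0:D₀), δ, (0:D₁)))
    simpa using h'
  exact Prod.ext h1 (Prod.ext h2 h3)

end Lmul

section FSurj

lemma f_e1part (f : DAmod D₀ D₁ M →ₗ[Aᵐᵒᵖ] DAmod D₀ D₁ M) (d : D₁) :
    f (((0:D₀), (0 : RightDual D₁ M), d)) =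
      ((0:D₀), (0 : RightDual D₁ M),
        (f ((0:D₀), (0 : RightDual D₁ M), (1:D₁))).2.2 * d) := by
  have h1 : (((0:D₀), (0 : RightDual D₁ M), d) : DAmod D₀ D₁ M)
      = (op (((0:D₀), (0:M), d) : A)) • (((0:D₀), (0 : RightDual D₁ M), (1:D₁)) : DAmod D₀ D₁ M) := by
    rw [smulQ]
    refine Prod.ext ?_ (Prod.ext ?_ ?_) <;> simp
  rw [h1, map_smul, smulQ]
  refine Prod.ext ?_ (Prod.ext ?_ ?_)
  · simp
  · show op (0:D₀) • (f ((0:D₀), (0 : RightDual D₁ M), (1:D₁))).2.1 = 0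
    exact op0_smul _
  · simp

lemma f_one_shape (f : DAmod D₀ D₁ M →ₗ[Aᵐᵒᵖ] DAmod D₀ D₁ M) :
    f (((1:D₀), (0 : RightDual D₁ M), (0:D₁)))
      = ((f (((1:D₀), (0 : RightDual D₁ M), (0:D₁)))).1, (0 : RightDual D₁ M), (0:D₁)) := by
  have h1 : (((1:D₀), (0 : RightDual D₁ M), (0:D₁)) : DAmod D₀ D₁ M)
      = (op (Species.e0 D₀ D₁ M)) • (((1:D₀), (0 : RightDual D₁ M), (0:D₁)) : DAmod D₀ D₁ M) := by
    rw [smulQ]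
    refine Prod.ext ?_ (Prod.ext ?_ ?_) <;> simp [Species.e0]
  refine Prod.ext rfl (Prod.ext ?_ ?_)
  · -- middle component is 0
    apply LinearMap.ext
    intro m
    have hz : (op (((0:D₀), m, (0:D₁)) : A)) • (((1:D₀), (0 : RightDual D₁ M), (0:D₁)) : DAmod D₀ D₁ M) = 0 := by
      rw [smulQ]
      refine Prod.ext ?_ (Prod.ext ?_ ?_) <;> simp [ir_zero_fst, ir_zero_snd]
    have h2 : (op (((0:D₀), m, (0:D₁)) : A)) • f (((1:D₀), (0 : RightDual D₁ M), (0:D₁))) = 0 := by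
      rw [← map_smul, hz, map_zero]
    have h3 : (f (((1:D₀), (0 : RightDual D₁ M), (0:D₁)))).2.1 m
        + (f (((1:D₀), (0 : RightDual D₁ M), (0:D₁)))).2.2 * 0 = 0 :=
      congrArg (fun q : DAmod D₀ D₁ M => q.2.2) h2
    simpa using h3
  · -- last component is 0
    have h2 := congrArg (fun q : DAmod D₀ D₁ M => q.2.2) (congrArg f h1)
    rw [map_smul] at h2
    have h4 : (f (((1:D₀), (0 : RightDual D₁ M), (0:D₁)))).2.2
        = (f (((1:D₀), (0 : RightDual D₁ M), (0:D₁)))).2.1 (0:M)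
          + (f (((1:D₀), (0 : RightDual D₁ M), (0:D₁)))).2.2 * 0 := h2
    simpa using h4

lemma f_upper (f : DAmod D₀ D₁ M →ₗ[Aᵐᵒᵖ] DAmod D₀ D₁ M) (c : D₀) :
    f ((c, (0 : RightDual D₁ M), (0:D₁)))
      = ((f (((1:D₀), (0 : RightDual D₁ M), (0:D₁)))).1 * c, (0 : RightDual D₁ M), (0:D₁)) := by
  have h1 : ((c, (0 : RightDual D₁ M), (0:D₁)) : DAmod D₀ D₁ M)
      = (op ((c, (0:M), (0:D₁)) : A)) • (((1:D₀), (0 : RightDual D₁ M), (0:D₁)) : DAmod D₀ D₁ M) := by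
    rw [smulQ]
    refine Prod.ext ?_ (Prod.ext ?_ ?_) <;> simp
  rw [h1, map_smul, f_one_shape f]
  erw [smulQ]
  refine Prod.ext rfl (Prod.ext ?_ ?_)
  · show op c • (0 : RightDual D₁ M) = 0
    exact smul_zero _
  · simp

lemma f_mid (f : DAmod D₀ D₁ M →ₗ[Aᵐᵒᵖ] DAmod D₀ D₁ M) (δ : RightDual D₁ M) :
    f (((0:D₀), δ, (0:D₁)))
      = ((f (((0:D₀), δ, (0:D₁)))).1,
         (f (((0:D₀), (0 : RightDual D₁ M), (1:D₁)))).2.2 • δ, (0:D₁)) := by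
  have h1 : (((0:D₀), δ, (0:D₁)) : DAmod D₀ D₁ M)
      = (op (Species.e0 D₀ D₁ M)) • (((0:D₀), δ, (0:D₁)) : DAmod D₀ D₁ M) := by
    rw [smulQ]
    refine Prod.ext ?_ (Prod.ext ?_ ?_) <;> simp [Species.e0, op_one]
  refine Prod.ext rfl (Prod.ext ?_ ?_)
  · -- middle component
    apply LinearMap.ext
    intro m
    have hz : (op (((0:D₀), m, (0:D₁)) : A)) • (((0:D₀), δ, (0:D₁)) : DAmod D₀ D₁ M)
        = (((0:D₀), (0 : RightDual D₁ M), δ m) : DAmod D₀ D₁ M) := by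
      rw [smulQ]
      refine Prod.ext ?_ (Prod.ext ?_ ?_)
      · simp
      · exact op0_smul δ
      · simp
    have h2 : f ((((0:D₀), (0 : RightDual D₁ M), δ m) : DAmod D₀ D₁ M))
        = (op (((0:D₀), m, (0:D₁)) : A)) • f (((0:D₀), δ, (0:D₁))) := by
      rw [← map_smul, hz]
    rw [f_e1part f] at h2
    have h3 : (f (((0:D₀), (0 : RightDual D₁ M), (1:D₁)))).2.2 * δ m
        = (f (((0:D₀), δ, (0:D₁)))).2.1 m + (f (((0:D₀), δ, (0:D₁)))).2.2 * 0 :=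
      congrArg (fun q : DAmod D₀ D₁ M => q.2.2) h2
    show (f (((0:D₀), δ, (0:D₁)))).2.1 m
        = ((f (((0:D₀), (0 : RightDual D₁ M), (1:D₁)))).2.2 • δ) m
    rw [LinearMap.smul_apply, smul_eq_mul]
    simpa using h3.symm
  · -- last component is 0
    have h2 := congrArg (fun q : DAmod D₀ D₁ M => q.2.2) (congrArg f h1)
    rw [map_smul] at h2
    have h4 : (f (((0:D₀), δ, (0:D₁)))).2.2
        = (f (((0:D₀), δ, (0:D₁)))).2.1 (0:M)
          + (f (((0:D₀), δ, (0:D₁)))).2.2 * 0 := h2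
    simpa using h4

lemma lmul_surj (e : M ≃ₗ[D₀] RightDual D₀ (RightDual D₁ M))
    (lmul : Species D₀ D₁ M → (DAmod D₀ D₁ M →ₗ[Aᵐᵒᵖ] DAmod D₀ D₁ M))
    (hlmul : ∀ (y : Species D₀ D₁ M) (p : DAmod D₀ D₁ M),
      lmul y p = (y.1 * p.1 + e y.2.1 p.2.1, y.2.2 • p.2.1, y.2.2 * p.2.2)) :
    Function.Surjective lmul := by
  intro f
  -- the upper-corner functional of f, as an element of M**
  let h : RightDual D₀ (RightDual D₁ M) :=
    { toFun := fun δ => (f ((0:D₀), δ, (0:D₁))).1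
      map_add' := fun δ δ' => by
        have hsplit : (((0:D₀), δ + δ', (0:D₁)) : DAmod D₀ D₁ M)
            = (((0:D₀), δ, (0:D₁)) : DAmod D₀ D₁ M) + (((0:D₀), δ', (0:D₁)) : DAmod D₀ D₁ M) := by
          refine Prod.ext ?_ (Prod.ext ?_ ?_)
          · show (0:D₀) = 0 + 0
            rw [add_zero]
          · rfl
          · show (0:D₁) = 0 + 0
            rw [add_zero]
        show (f ((0:D₀), δ + δ', (0:D₁))).1 = _
        rw [hsplit, map_add]
        rfl
      map_smul' := fun r δ => by
        have h1 : (((0:D₀), r • δ, (0:D₁)) : DAmod D₀ D₁ M)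
            = (op ((r.unop, (0:M), (0:D₁)) : A)) • (((0:D₀), δ, (0:D₁)) : DAmod D₀ D₁ M) := by
          rw [smulQ]
          refine Prod.ext ?_ (Prod.ext ?_ ?_) <;> simp
        show (f ((0:D₀), r • δ, (0:D₁))).1 = r • (f ((0:D₀), δ, (0:D₁))).1
        rw [h1, map_smul]
        rfl }
  refine ⟨((f (((1:D₀), (0 : RightDual D₁ M), (0:D₁)))).1, e.symm h,
    (f (((0:D₀), (0 : RightDual D₁ M), (1:D₁)))).2.2), ?_⟩
  apply LinearMap.ext
  intro p
  rw [hlmul]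
  have hdecp : p = (((p.1, (0 : RightDual D₁ M), (0:D₁)) : DAmod D₀ D₁ M)
      + (((0:D₀), p.2.1, (0:D₁)) : DAmod D₀ D₁ M))
      + (((0:D₀), (0 : RightDual D₁ M), p.2.2) : DAmod D₀ D₁ M) := by
    refine Prod.ext ?_ (Prod.ext ?_ ?_)
    · show p.1 = (p.1 + 0) + 0
      rw [add_zero, add_zero]
    · show p.2.1 = ((0 : RightDual D₁ M) + p.2.1) + 0
      rw [zero_add, add_zero]
    · show p.2.2 = ((0:D₁) + 0) + p.2.2
      rw [zero_add, zero_add]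
  conv_rhs => rw [hdecp, map_add, map_add, f_upper f p.1, f_mid f p.2.1, f_e1part f p.2.2]
  refine Prod.ext ?_ (Prod.ext ?_ ?_)
  · show (f (((1:D₀), (0 : RightDual D₁ M), (0:D₁)))).1 * p.1 + e (e.symm h) p.2.1
      = ((f (((1:D₀), (0 : RightDual D₁ M), (0:D₁)))).1 * p.1
        + (f (((0:D₀), p.2.1, (0:D₁)))).1) + 0
    rw [e.apply_symm_apply, add_zero]
    rfl
  · show (f (((0:D₀), (0 : RightDual D₁ M), (1:D₁)))).2.2 • p.2.1
      = ((0 : RightDual D₁ M)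
        + (f (((0:D₀), (0 : RightDual D₁ M), (1:D₁)))).2.2 • p.2.1) + 0
    rw [zero_add, add_zero]
  · show (f (((0:D₀), (0 : RightDual D₁ M), (1:D₁)))).2.2 * p.2.2
      = ((0:D₁) + 0) + (f (((0:D₀), (0 : RightDual D₁ M), (1:D₁)))).2.2 * p.2.2
    rw [zero_add, zero_add]

end FSurj

section Simples

/-- inclusion of the simple module `(D₀ 0)` into `DAmod`. -/
noncomputable def j0 : E0Simple D₀ D₁ M →ₗ[Aᵐᵒᵖ] DAmod D₀ D₁ M where
  toFun a := ((a, (0 : RightDual D₁ M), (0:D₁)) : DAmod D₀ D₁ M)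
  map_add' a a' := by
    refine Prod.ext rfl (Prod.ext ?_ ?_)
    · show (0 : RightDual D₁ M) = 0 + 0
      rw [add_zero]
    · show (0:D₁) = 0 + 0
      rw [add_zero]
  map_smul' r a := by
    refine Prod.ext rfl (Prod.ext ?_ ?_)
    · show (0 : RightDual D₁ M) = op (unop r).1 • (0 : RightDual D₁ M)
      rw [smul_zero]
    · show (0:D₁) = (0 : RightDual D₁ M) (unop r).2.1 + 0 * (unop r).2.2
      simp

lemma j0_inj : Function.Injective (j0 (D₀ := D₀) (D₁ := D₁) (M := M)) := by
  intro a a' hh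
  exact congrArg (fun q : DAmod D₀ D₁ M => q.1) hh

/-- inclusion of the simple module `(0 D₁)` into `DAmod`. -/
noncomputable def j1 : SimpleRight D₀ D₁ M →ₗ[Aᵐᵒᵖ] DAmod D₀ D₁ M where
  toFun d := (((0:D₀), (0 : RightDual D₁ M), d) : DAmod D₀ D₁ M)
  map_add' d d' := by
    refine Prod.ext ?_ (Prod.ext ?_ ?_)
    · show (0:D₀) = 0 + 0
      rw [add_zero]
    · show (0 : RightDual D₁ M) = 0 + 0
      rw [add_zero]
    · rfl
  map_smul' r d := by
    refine Prod.ext ?_ (Prod.ext ?_ ?_)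
    · show (0:D₀) = 0 * (unop r).1
      rw [zero_mul]
    · show (0 : RightDual D₁ M) = op (unop r).1 • (0 : RightDual D₁ M)
      rw [smul_zero]
    · show r • d = (0 : RightDual D₁ M) (unop r).2.1 + d * (unop r).2.2
      show d * (unop r).2.2 = (0 : RightDual D₁ M) (unop r).2.1 + d * (unop r).2.2
      simp

lemma j1_inj : Function.Injective (j1 (D₀ := D₀) (D₁ := D₁) (M := M)) := by
  intro d d' hh
  exact congrArg (fun q : DAmod D₀ D₁ M => q.2.2) hh

lemma inj_aux {T S : Type} [AddCommGroup T] [Module Aᵐᵒᵖ T]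
    [AddCommGroup S] [Module Aᵐᵒᵖ S]
    (g : T →ₗ[Aᵐᵒᵖ] S) (t : T) (ht : g t ≠ 0)
    (hgen : ∀ z : T, z ≠ 0 → ∃ r : Aᵐᵒᵖ, r • z = t) : Function.Injective g := by
  intro x x' hxx
  by_contra hne
  have hz : x - x' ≠ 0 := sub_ne_zero.mpr hne
  obtain ⟨r, hr⟩ := hgen _ hz
  apply ht
  have h0 : g (x - x') = 0 := by rw [map_sub, hxx, sub_self]
  rw [← hr, map_smul, h0, smul_zero]

lemma surj_of_simple {S : Type} [AddCommGroup S] [Module Aᵐᵒᵖ S]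
    (hS : IsSimpleModule Aᵐᵒᵖ S) {T : Type} [AddCommGroup T] [Module Aᵐᵒᵖ T]
    (g : T →ₗ[Aᵐᵒᵖ] S) (t : T) (ht : g t ≠ 0) : Function.Surjective g := by
  haveI := hS
  rcases eq_bot_or_eq_top (LinearMap.range g) with hb | htop
  · exfalso
    apply ht
    have : g t ∈ LinearMap.range g := LinearMap.mem_range_self g t
    rw [hb] at this
    exact this
  · exact LinearMap.range_eq_top.mp htop

theorem simple_embeds (S : Type) [AddCommGroup S] [Module Aᵐᵒᵖ S]
    (hS : IsSimpleModule Aᵐᵒᵖ S) :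
    ∃ f : S →ₗ[Aᵐᵒᵖ] DAmod D₀ D₁ M, Function.Injective f := by
  haveI := hS
  haveI : Nontrivial S := IsSimpleModule.nontrivial Aᵐᵒᵖ S
  obtain ⟨s, hs⟩ := exists_ne (0 : S)
  -- generators of nonzero elements in the coefficient simples
  have hgen1 : ∀ z : SimpleRight D₀ D₁ M, z ≠ 0 → ∃ r : Aᵐᵒᵖ, r • z = (1:D₁) := by
    intro z hz
    refine ⟨op (((0:D₀), (0:M), z⁻¹) : A), ?_⟩
    show z * z⁻¹ = 1
    exact mul_inv_cancel₀ hz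
  have hgen0 : ∀ z : E0Simple D₀ D₁ M, z ≠ 0 → ∃ r : Aᵐᵒᵖ, r • z = (1:D₀) := by
    intro z hz
    refine ⟨op (((z⁻¹ : D₀), (0:M), (0:D₁)) : A), ?_⟩
    show z * z⁻¹ = 1
    exact mul_inv_cancel₀ hz
  by_cases h1 : (op (Species.e1 D₀ D₁ M) : Aᵐᵒᵖ) • s ≠ 0
  · -- the bottom-right corner acts nontrivially on s
    let g : SimpleRight D₀ D₁ M →ₗ[Aᵐᵒᵖ] S :=
      { toFun := fun d => (op (((0:D₀), (0:M), d) : A) : Aᵐᵒᵖ) • s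
        map_add' := fun d d' => by
          have hsp : (((0:D₀), (0:M), d + d') : A) = ((0:D₀), (0:M), d) + ((0:D₀), (0:M), d') := by
            refine Prod.ext ?_ (Prod.ext ?_ ?_) <;> simp
          show (op (((0:D₀), (0:M), d + d') : A) : Aᵐᵒᵖ) • s
              = (op (((0:D₀), (0:M), d) : A) : Aᵐᵒᵖ) • s + (op (((0:D₀), (0:M), d') : A) : Aᵐᵒᵖ) • s
          rw [hsp, op_add, add_smul]
        map_smul' := fun r d => by
          have h2 : r • ((op (((0:D₀), (0:M), d) : A) : Aᵐᵒᵖ) • s)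
              = (op ((((0:D₀), (0:M), d) : A) * unop r) : Aᵐᵒᵖ) • s := by
            conv_lhs => rw [← mul_smul, ← op_unop r, ← op_mul]
          have h3 : (((0:D₀), (0:M), d) : A) * unop r = ((0:D₀), (0:M), d * (unop r).2.2) := by
            refine Prod.ext ?_ (Prod.ext ?_ ?_) <;> simp
          show (op (((0:D₀), (0:M), d * (unop r).2.2) : A) : Aᵐᵒᵖ) • s
              = r • ((op (((0:D₀), (0:M), d) : A) : Aᵐᵒᵖ) • s)
          rw [h2, h3] }
    have hg1 : g 1 ≠ 0 := by
      show (op (((0:D₀), (0:M), (1:D₁)) : A) : Aᵐᵒᵖ) • s ≠ 0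
      exact h1
    obtain ⟨finv⟩ : Nonempty (S ≃ₗ[Aᵐᵒᵖ] SimpleRight D₀ D₁ M) :=
      ⟨(LinearEquiv.ofBijective g ⟨inj_aux g 1 hg1 hgen1, surj_of_simple hS g 1 hg1⟩).symm⟩
    refine ⟨(j1).comp finv.toLinearMap, ?_⟩
    rw [LinearMap.coe_comp]
    exact j1_inj.comp finv.injective
  · push_neg at h1
    by_cases h2 : ∃ m : M, (op (((0:D₀), m, (0:D₁)) : A) : Aᵐᵒᵖ) • s ≠ 0
    · -- the radical acts nontrivially on s
      obtain ⟨m, hm⟩ := h2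
      let g : SimpleRight D₀ D₁ M →ₗ[Aᵐᵒᵖ] S :=
        { toFun := fun d => (op (((0:D₀), (op d : D₁ᵐᵒᵖ) • m, (0:D₁)) : A) : Aᵐᵒᵖ) • s
          map_add' := fun d d' => by
            have hsp : (((0:D₀), (op (d + d') : D₁ᵐᵒᵖ) • m, (0:D₁)) : A)
                = ((0:D₀), (op d : D₁ᵐᵒᵖ) • m, (0:D₁)) + ((0:D₀), (op d' : D₁ᵐᵒᵖ) • m, (0:D₁)) := by
              refine Prod.ext ?_ (Prod.ext ?_ ?_) <;> simp [op_add, add_smul]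
            show (op (((0:D₀), (op (d + d') : D₁ᵐᵒᵖ) • m, (0:D₁)) : A) : Aᵐᵒᵖ) • s
                = (op (((0:D₀), (op d : D₁ᵐᵒᵖ) • m, (0:D₁)) : A) : Aᵐᵒᵖ) • s
                  + (op (((0:D₀), (op d' : D₁ᵐᵒᵖ) • m, (0:D₁)) : A) : Aᵐᵒᵖ) • s
            rw [hsp, op_add, add_smul]
          map_smul' := fun r d => by
            have h2' : r • ((op (((0:D₀), (op d : D₁ᵐᵒᵖ) • m, (0:D₁)) : A) : Aᵐᵒᵖ) • s)
                = (op ((((0:D₀), (op d : D₁ᵐᵒᵖ) • m, (0:D₁)) : A) * unop r) : Aᵐᵒᵖ) • s := by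
              conv_lhs => rw [← mul_smul, ← op_unop r, ← op_mul]
            have h3 : (((0:D₀), (op d : D₁ᵐᵒᵖ) • m, (0:D₁)) : A) * unop r
                = ((0:D₀), (op (d * (unop r).2.2) : D₁ᵐᵒᵖ) • m, (0:D₁)) := by
              refine Prod.ext ?_ (Prod.ext ?_ ?_) <;> simp [op_mul, mul_smul]
            show (op (((0:D₀), (op (d * (unop r).2.2) : D₁ᵐᵒᵖ) • m, (0:D₁)) : A) : Aᵐᵒᵖ) • s
                = r • ((op (((0:D₀), (op d : D₁ᵐᵒᵖ) • m, (0:D₁)) : A) : Aᵐᵒᵖ) • s)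
            rw [h2', h3] }
      have hg1 : g 1 ≠ 0 := by
        show (op (((0:D₀), (op (1:D₁) : D₁ᵐᵒᵖ) • m, (0:D₁)) : A) : Aᵐᵒᵖ) • s ≠ 0
        rw [op_one, one_smul]
        exact hm
      obtain ⟨finv⟩ : Nonempty (S ≃ₗ[Aᵐᵒᵖ] SimpleRight D₀ D₁ M) :=
        ⟨(LinearEquiv.ofBijective g ⟨inj_aux g 1 hg1 hgen1, surj_of_simple hS g 1 hg1⟩).symm⟩
      refine ⟨(j1).comp finv.toLinearMap, ?_⟩
      rw [LinearMap.coe_comp]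
      exact j1_inj.comp finv.injective
    · -- s is a copy of (D₀ 0)
      push_neg at h2
      -- e₀ acts as identity on s
      have hsum : (Species.e0 D₀ D₁ M) + Species.e1 D₀ D₁ M = 1 := by
        refine Prod.ext ?_ (Prod.ext ?_ ?_) <;> simp [Species.e0, Species.e1]
      have hse0 : (op (Species.e0 D₀ D₁ M) : Aᵐᵒᵖ) • s = s := by
        have hadd := add_smul (op (Species.e0 D₀ D₁ M) : Aᵐᵒᵖ) (op (Species.e1 D₀ D₁ M)) s
        rw [← op_add, hsum, op_one, one_smul, h1, add_zero] at hadd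
        exact hadd.symm
      let g : E0Simple D₀ D₁ M →ₗ[Aᵐᵒᵖ] S :=
        { toFun := fun a => (op ((a, (0:M), (0:D₁)) : A) : Aᵐᵒᵖ) • s
          map_add' := fun a a' => by
            have hsp : ((a + a', (0:M), (0:D₁)) : A) = (a, (0:M), (0:D₁)) + (a', (0:M), (0:D₁)) := by
              refine Prod.ext ?_ (Prod.ext ?_ ?_) <;> simp
            show (op (((a + a'), (0:M), (0:D₁)) : A) : Aᵐᵒᵖ) • s
                = (op ((a, (0:M), (0:D₁)) : A) : Aᵐᵒᵖ) • s + (op ((a', (0:M), (0:D₁)) : A) : Aᵐᵒᵖ) • s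
            rw [hsp, op_add, add_smul]
          map_smul' := fun r a => by
            have h2' : r • ((op ((a, (0:M), (0:D₁)) : A) : Aᵐᵒᵖ) • s)
                = (op (((a, (0:M), (0:D₁)) : A) * unop r) : Aᵐᵒᵖ) • s := by
              conv_lhs => rw [← mul_smul, ← op_unop r, ← op_mul]
            have h3 : ((a, (0:M), (0:D₁)) : A) * unop r
                = ((a * (unop r).1, (0:M), (0:D₁)) : A) + ((0:D₀), a • (unop r).2.1, (0:D₁)) := by
              refine Prod.ext ?_ (Prod.ext ?_ ?_) <;> simp
            show (op ((a * (unop r).1, (0:M), (0:D₁)) : A) : Aᵐᵒᵖ) • s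
                = r • ((op ((a, (0:M), (0:D₁)) : A) : Aᵐᵒᵖ) • s)
            rw [h2', h3, op_add, add_smul, h2, add_zero] }
      have hg1 : g 1 ≠ 0 := by
        show (op (((1:D₀), (0:M), (0:D₁)) : A) : Aᵐᵒᵖ) • s ≠ 0
        have : (((1:D₀), (0:M), (0:D₁)) : A) = Species.e0 D₀ D₁ M := rfl
        rw [this, hse0]
        exact hs
      obtain ⟨finv⟩ : Nonempty (S ≃ₗ[Aᵐᵒᵖ] E0Simple D₀ D₁ M) :=
        ⟨(LinearEquiv.ofBijective g ⟨inj_aux g 1 hg1 hgen0, surj_of_simple hS g 1 hg1⟩).symm⟩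
      refine ⟨(j0).comp finv.toLinearMap, ?_⟩
      rw [LinearMap.coe_comp]
      exact j0_inj.comp finv.injective

end Simples

end Statement6Aux

/-- Let `M` be a `D₀`–`D₁`-bimodule with symmetric duals (with a fixed
identification `e : M ≅ M**`), and let `DA_M` be the `A_M`-bimodule
`(D₀, 0; M*, D₁)`, with left action `(α, m; 0, β)·(a, 0; δ, b) =
(αa + m(δ), 0; βδ, βb)` and the evident right action.  Then `DA_M` is the injective
hull of the semisimple right module `(D₀ 0) ⊕ (0 D₁)`, the natural map
`A_M → End_{A_M}((DA_M)_{A_M})` given by the left action is a ring isomorphism, and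
`DA_M` contains all simple right `A_M`-modules; hence `ω = (DA_M)[-1]` is a
canonical complex for `A_M`. -/
theorem statement6
    -- `M` has symmetric duals, via the fixed identification `e`:
    [Module.Finite D₀ M] [Module.Finite D₁ᵐᵒᵖ M]
    [Module.Finite D₁ (RightDual D₁ M)] [Module.Finite D₀ᵐᵒᵖ (RightDual D₁ M)]
    (e : M ≃ₗ[D₀] RightDual D₀ (RightDual D₁ M))
    (he : ∀ (b : D₁ᵐᵒᵖ) (x : M), e (b • x) = b • e x)
    -- the left `A_M`-action on `DA_M` (each `lmul y` is right `A_M`-linear):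
    (lmul : Species D₀ D₁ M → (DAmod D₀ D₁ M →ₗ[(Species D₀ D₁ M)ᵐᵒᵖ] DAmod D₀ D₁ M))
    (hlmul : ∀ (y : Species D₀ D₁ M) (p : DAmod D₀ D₁ M),
      lmul y p = (y.1 * p.1 + e y.2.1 p.2.1, y.2.2 • p.2.1, y.2.2 * p.2.2)) :
    -- `DA_M` is injective as a right module ...
    Module.Injective (Species D₀ D₁ M)ᵐᵒᵖ (DAmod D₀ D₁ M) ∧
    -- ... its socle is the semisimple module `(D₀ 0) ⊕ (0 D₁)` ...
    Nonempty ((socDA D₀ D₁ M) ≃ₗ[(Species D₀ D₁ M)ᵐᵒᵖ]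
      (E0Simple D₀ D₁ M × SimpleRight D₀ D₁ M)) ∧
    -- ... of which `DA_M` is an essential extension (so `DA_M` is the injective
    -- hull of `(D₀ 0) ⊕ (0 D₁)`):
    (∀ K : Submodule (Species D₀ D₁ M)ᵐᵒᵖ (DAmod D₀ D₁ M),
      K ⊓ socDA D₀ D₁ M = ⊥ → K = ⊥) ∧
    -- the natural map `A_M → End((DA_M)_{A_M})` is a ring isomorphism:
    (lmul 1 = LinearMap.id) ∧
    (∀ y y', lmul (y * y') = (lmul y).comp (lmul y')) ∧
    (∀ y y', lmul (y + y') = lmul y + lmul y') ∧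
    Function.Bijective lmul ∧
    -- `DA_M` contains all simple right `A_M`-modules:
    (∀ (S : Type) [AddCommGroup S] [Module (Species D₀ D₁ M)ᵐᵒᵖ S],
      IsSimpleModule (Species D₀ D₁ M)ᵐᵒᵖ S →
        ∃ f : S →ₗ[(Species D₀ D₁ M)ᵐᵒᵖ] DAmod D₀ D₁ M, Function.Injective f) := by
  refine ⟨Statement6Aux.baerDA.injective, ⟨Statement6Aux.socEquiv⟩,
    fun K hK => Statement6Aux.socEssential K hK,
    Statement6Aux.lmul_one e lmul hlmul,
    fun y y' => Statement6Aux.lmul_mul e lmul hlmul y y' he,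
    fun y y' => Statement6Aux.lmul_add e lmul hlmul y y',
    ⟨Statement6Aux.lmul_inj e lmul hlmul, Statement6Aux.lmul_surj e lmul hlmul⟩,
    fun S _ _ hS => Statement6Aux.simple_embeds S hS⟩

end Statement6
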